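/- Semi-discrete optimal transportation optimality (Yau-type, quadratic cost): let μ be a finite Borel measure on ℝ^d with finite second moment, let p₁, …, pₙ ∈ ℝ^d be pairwise distinct, ν₁, …, νₙ > 0 with Σᵢνᵢ = μ(ℝ^d), and suppose h ∈ ℝⁿ satisfies μ(Vᵢ(h)) = νᵢ for all i, where Vᵢ(h) = {x : ∀ j, ⟪pᵢ, x⟫ + hᵢ ≥ ⟪pⱼ, x⟫ + hⱼ} are the nearest power cells, and the pairwise intersections Vᵢ(h) ∩ Vⱼ(h), i ≠ j, are μ-null. Let T_h be any measurable map with T_h(x) = pᵢ for all x in Vᵢ(h) ∖ ⋃_{j≠i} Vⱼ(h). Then for every measurable map T taking values in {p₁, …, pₙ} with μ(T⁻¹{pᵢ}) = νᵢ for all i, we have ∫ ‖x − T_h(x)‖² dμ(x) ≤ ∫ ‖x − T(x)‖² dμ(x); i.e., T_h minimizes the quadratic transportation cost. -/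

import Mathlib

open MeasureTheory
open scoped RealInnerProductSpace Classical

/-- The nearest power cell of index `i` for points `p` and heights `h`. -/
def nearCell {d n : ℕ} (p : Fin n → EuclideanSpace ℝ (Fin d)) (h : Fin n → ℝ) (i : Fin n) :
    Set (EuclideanSpace ℝ (Fin d)) :=
  {x | ∀ j, ⟪p j, x⟫ + h j ≤ ⟪p i, x⟫ + h i}

lemma aux_collapse {β : Type*} [DecidableEq β] {n : ℕ} (q : Fin n → β) (hq : Function.Injective q)
    (c : Fin n → ℝ) {i : Fin n} {y : β} (hy : y = q i) :
    (∑ j, if y = q j then c j else 0) = c i := by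
  subst hy
  simp [hq.eq_iff]

lemma aux_int {α : Type*} [MeasurableSpace α] {β : Type*} [MeasurableSpace β]
    [MeasurableSingletonClass β] [DecidableEq β]
    (μ : Measure α) [IsFiniteMeasure μ] (S : α → β) (hS : Measurable S)
    {n : ℕ} (q : Fin n → β) (ν : Fin n → ℝ) (hν : ∀ i, 0 ≤ ν i)
    (hpre : ∀ i, μ (S ⁻¹' {q i}) = ENNReal.ofReal (ν i)) (c : Fin n → ℝ) :
    Integrable (fun x => ∑ i, if S x = q i then c i else 0) μ ∧
    ∫ x, (∑ i, if S x = q i then c i else 0) ∂μ = ∑ i, c i * ν i := by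
  have hms : ∀ i : Fin n, MeasurableSet (S ⁻¹' {q i}) := fun i => hS (measurableSet_singleton _)
  have heq : ∀ i : Fin n, (fun x => if S x = q i then c i else 0)
      = (S ⁻¹' {q i}).indicator (fun _ => c i) := by
    intro i; ext x; by_cases hx : S x = q i <;> simp [Set.indicator, hx]
  have hint : ∀ i : Fin n, Integrable (fun x => if S x = q i then c i else 0) μ := by
    intro i; rw [heq i]; exact (integrable_const (c i)).indicator (hms i)
  constructor
  · exact integrable_finset_sum _ fun i _ => hint i
  · rw [integral_finset_sum _ fun i _ => hint i]
    refine Finset.sum_congr rfl fun i _ => ?_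
    rw [heq i, integral_indicator_const _ (hms i), measureReal_def, hpre i, smul_eq_mul,
        ENNReal.toReal_ofReal (hν i), mul_comm]

theorem stmt_13 {d n : ℕ}
    (μ : Measure (EuclideanSpace ℝ (Fin d))) [IsFiniteMeasure μ]
    (hμ2 : Integrable (fun x => ‖x‖ ^ 2) μ)
    (p : Fin n → EuclideanSpace ℝ (Fin d)) (hp : Function.Injective p)
    (ν : Fin n → ℝ) (hν : ∀ i, 0 < ν i)
    (hmass : ∑ i, ν i = (μ Set.univ).toReal)
    (h : Fin n → ℝ)
    (hvol : ∀ i, μ (nearCell p h i) = ENNReal.ofReal (ν i))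
    (hnull : ∀ i j, i ≠ j → μ (nearCell p h i ∩ nearCell p h j) = 0)
    (Th : EuclideanSpace ℝ (Fin d) → EuclideanSpace ℝ (Fin d))
    (hThm : Measurable Th)
    (hTh : ∀ i, ∀ x ∈ nearCell p h i \ ⋃ j ∈ ({i}ᶜ : Set (Fin n)), nearCell p h j, Th x = p i) :
    ∀ T : EuclideanSpace ℝ (Fin d) → EuclideanSpace ℝ (Fin d),
      Measurable T → (∀ x, ∃ i, T x = p i) →
      (∀ i, μ (T ⁻¹' {p i}) = ENNReal.ofReal (ν i)) →
      ∫ x, ‖x - Th x‖ ^ 2 ∂μ ≤ ∫ x, ‖x - T x‖ ^ 2 ∂μ := by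
  intro T hTm hTval hTpre
  rcases Nat.eq_zero_or_pos n with hn | hn
  · subst hn; obtain ⟨i, -⟩ := hTval 0; exact i.elim0
  -- every point is in some cell
  have hcov : ∀ x, ∃ i, x ∈ nearCell p h i := by
    intro x
    obtain ⟨i, -, hi⟩ := Finset.exists_max_image Finset.univ
      (fun i => ⟪p i, x⟫ + h i) ⟨⟨0, hn⟩, Finset.mem_univ _⟩
    exact ⟨i, fun j => hi j (Finset.mem_univ _)⟩
  set bad : Set (EuclideanSpace ℝ (Fin d)) :=
    ⋃ (i) (j) (_ : i ≠ j), nearCell p h i ∩ nearCell p h j with hbad_def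
  have hbad : μ bad = 0 :=
    measure_iUnion_null fun i => measure_iUnion_null fun j =>
      measure_iUnion_null fun hij => hnull i j hij
  have hbad_ae : ∀ᵐ x ∂μ, x ∉ bad := by
    rw [ae_iff]
    simpa using hbad
  have hgood : ∀ x, x ∉ bad → ∀ i, x ∈ nearCell p h i → Th x = p i := by
    intro x hx i hxi
    refine hTh i x ⟨hxi, ?_⟩
    intro hmem
    simp only [Set.mem_iUnion, Set.mem_compl_iff, Set.mem_singleton_iff] at hmem
    obtain ⟨j, hji, hxj⟩ := hmem
    exact hx (Set.mem_iUnion.2 ⟨i, Set.mem_iUnion.2 ⟨j, Set.mem_iUnion.2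
      ⟨fun hij => hji (hij.symm), ⟨hxi, hxj⟩⟩⟩⟩)
  have hThpre : ∀ i, μ (Th ⁻¹' {p i}) = ENNReal.ofReal (ν i) := by
    intro i
    have h1 : μ (Th ⁻¹' {p i} \ nearCell p h i) = 0 := by
      refine measure_mono_null ?_ hbad
      rintro x ⟨hx1, hx2⟩
      by_contra hxbad
      obtain ⟨j, hj⟩ := hcov x
      have := hgood x hxbad j hj
      have : j = i := hp (by rw [← this]; exact hx1)
      exact hx2 (this ▸ hj)
    have h2 : μ (nearCell p h i \ Th ⁻¹' {p i}) = 0 := by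
      refine measure_mono_null ?_ hbad
      rintro x ⟨hx1, hx2⟩
      by_contra hxbad
      exact hx2 (hgood x hxbad i hx1)
    rw [measure_congr (MeasureTheory.ae_eq_set.2 ⟨h1, h2⟩), hvol i]
  have hThae : ∀ᵐ x ∂μ, ∃ i, Th x = p i := by
    filter_upwards [hbad_ae] with x hx
    obtain ⟨i, hi⟩ := hcov x
    exact ⟨i, hgood x hx i hi⟩
  -- a convenient bound
  set B : ℝ := ∑ i, ‖p i‖ with hB_def
  have hB0 : 0 ≤ B := Finset.sum_nonneg fun i _ => norm_nonneg _
  have hBle : ∀ i, ‖p i‖ ≤ B := fun i =>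
    Finset.single_le_sum (fun j _ => norm_nonneg (p j)) (Finset.mem_univ i)
  have hbound : Integrable (fun x => B * (1 + ‖x‖ ^ 2)) μ :=
    ((integrable_const (1 : ℝ)).add hμ2).const_mul B
  -- cost expansion for any admissible map
  have cost : ∀ S : EuclideanSpace ℝ (Fin d) → EuclideanSpace ℝ (Fin d),
      Measurable S → (∀ᵐ x ∂μ, ∃ i, S x = p i) →
      (∀ i, μ (S ⁻¹' {p i}) = ENNReal.ofReal (ν i)) →
      Integrable (fun x => ⟪S x, x⟫ + ∑ i, if S x = p i then h i else 0) μ ∧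
      ∫ x, ‖x - S x‖ ^ 2 ∂μ = ∫ x, ‖x‖ ^ 2 ∂μ
        - 2 * (∫ x, (⟪S x, x⟫ + ∑ i, if S x = p i then h i else 0) ∂μ)
        + 2 * ∑ i, h i * ν i + ∑ i, ‖p i‖ ^ 2 * ν i := by
    intro S hSm hSae hSpre
    have hSB : ∀ᵐ x ∂μ, ‖S x‖ ≤ B := by
      filter_upwards [hSae] with x ⟨i, hi⟩
      rw [hi]; exact hBle i
    have hinner_meas : AEStronglyMeasurable (fun x => ⟪S x, x⟫) μ :=
      (hSm.inner measurable_id).aestronglyMeasurable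
    have hInner : Integrable (fun x => ⟪S x, x⟫) μ := by
      refine Integrable.mono' hbound hinner_meas ?_
      filter_upwards [hSB] with x hx
      have h1 : |⟪S x, x⟫| ≤ ‖S x‖ * ‖x‖ := abs_real_inner_le_norm _ _
      have h2 : ‖x‖ ≤ 1 + ‖x‖ ^ 2 := by nlinarith [sq_nonneg (‖x‖ - 1), norm_nonneg x]
      have h3 : ‖S x‖ * ‖x‖ ≤ B * (1 + ‖x‖ ^ 2) := by
        have := norm_nonneg x
        nlinarith [norm_nonneg (S x)]
      calc ‖⟪S x, x⟫‖ = |⟪S x, x⟫| := rfl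
        _ ≤ ‖S x‖ * ‖x‖ := h1
        _ ≤ B * (1 + ‖x‖ ^ 2) := h3
    obtain ⟨hHint, hHval⟩ := aux_int μ S hSm p ν (fun i => (hν i).le) hSpre h
    obtain ⟨-, hNval⟩ := aux_int μ S hSm p ν (fun i => (hν i).le) hSpre (fun i => ‖p i‖ ^ 2)
    have hnormsq : Integrable (fun x => ‖S x‖ ^ 2) μ := by
      refine Integrable.mono' (integrable_const (B ^ 2)) ((hSm.norm.pow_const 2).aestronglyMeasurable) ?_
      filter_upwards [hSB] with x hx
      have : (0:ℝ) ≤ ‖S x‖ ^ 2 := sq_nonneg _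
      rw [Real.norm_eq_abs, abs_of_nonneg this]
      nlinarith [norm_nonneg (S x)]
    have hNeq : (fun x => ‖S x‖ ^ 2) =ᵐ[μ] fun x => ∑ i, if S x = p i then ‖p i‖ ^ 2 else 0 := by
      filter_upwards [hSae] with x ⟨i, hi⟩
      rw [aux_collapse p hp (fun i => ‖p i‖ ^ 2) hi, hi]
    have hNint : ∫ x, ‖S x‖ ^ 2 ∂μ = ∑ i, ‖p i‖ ^ 2 * ν i := by
      rw [integral_congr_ae hNeq]; exact hNval
    have hφ : Integrable (fun x => ⟪S x, x⟫ + ∑ i, if S x = p i then h i else 0) μ :=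
      hInner.add hHint
    refine ⟨hφ, ?_⟩
    have hexp : ∀ x, ‖x - S x‖ ^ 2 = ‖x‖ ^ 2 - 2 * ⟪S x, x⟫ + ‖S x‖ ^ 2 := by
      intro x
      rw [norm_sub_sq_real, real_inner_comm]
    calc ∫ x, ‖x - S x‖ ^ 2 ∂μ
        = ∫ x, (‖x‖ ^ 2 - 2 * ⟪S x, x⟫ + ‖S x‖ ^ 2) ∂μ := by
          exact integral_congr_ae (ae_of_all _ fun x => hexp x)
      _ = ∫ x, (‖x‖ ^ 2 - 2 * ⟪S x, x⟫) ∂μ + ∫ x, ‖S x‖ ^ 2 ∂μ :=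
          integral_add (hμ2.sub (hInner.const_mul 2)) hnormsq
      _ = ∫ x, ‖x‖ ^ 2 ∂μ - ∫ x, 2 * ⟪S x, x⟫ ∂μ + ∫ x, ‖S x‖ ^ 2 ∂μ := by
          rw [integral_sub hμ2 (hInner.const_mul 2)]
      _ = ∫ x, ‖x‖ ^ 2 ∂μ - 2 * ∫ x, ⟪S x, x⟫ ∂μ + ∑ i, ‖p i‖ ^ 2 * ν i := by
          rw [integral_const_mul, hNint]
      _ = ∫ x, ‖x‖ ^ 2 ∂μ
        - 2 * (∫ x, (⟪S x, x⟫ + ∑ i, if S x = p i then h i else 0) ∂μ)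
        + 2 * ∑ i, h i * ν i + ∑ i, ‖p i‖ ^ 2 * ν i := by
          rw [integral_add hInner hHint, hHval]; ring
  obtain ⟨iTh, eTh⟩ := cost Th hThm hThae hThpre
  obtain ⟨iT, eT⟩ := cost T hTm (ae_of_all _ hTval) hTpre
  rw [eTh, eT]
  have hmono : ∫ x, (⟪T x, x⟫ + ∑ i, if T x = p i then h i else 0) ∂μ
      ≤ ∫ x, (⟪Th x, x⟫ + ∑ i, if Th x = p i then h i else 0) ∂μ := by
    refine integral_mono_ae iT iTh ?_
    filter_upwards [hbad_ae] with x hx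
    obtain ⟨i, hi⟩ := hcov x
    have hThx : Th x = p i := hgood x hx i hi
    obtain ⟨j, hj⟩ := hTval x
    rw [aux_collapse p hp h hj, aux_collapse p hp h hThx, hj, hThx]
    exact hi j
  linarith
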